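/- Let v₀, v_x, v_y, h₀ : [0, π/(2f)) → ℝ be defined by v₀(t) = 0, v_x(t) = τ tan(ft), v_y(t) = -f tan(ft), h₀(t) = c e^{τt} sec(ft). Then these functions satisfy the reduced ODE system: v₀' = -v₀ v_y - τ v₀, v_x' = f τ - v_x v_y, v_y' = -f v_x - v_y² - f² - τ v_y, h₀' = -h₀ v_y + τ h₀, with initial conditions v₀(0) = v_x(0) = v_y(0) = 0, h₀(0) = c. -/

import Mathlib

theorem stmt_8 (f τ c : ℝ) (hf : 0 < f) :
    let v0 : ℝ → ℝ := fun _ => 0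
    let vx : ℝ → ℝ := fun t => τ * Real.tan (f * t)
    let vy : ℝ → ℝ := fun t => -f * Real.tan (f * t)
    let h0 : ℝ → ℝ := fun t => c * Real.exp (τ * t) / Real.cos (f * t)
    (∀ t ∈ Set.Ico (0 : ℝ) (Real.pi / (2 * f)),
        HasDerivAt v0 (-v0 t * vy t - τ * v0 t) t ∧
        HasDerivAt vx (f * τ - vx t * vy t) t ∧
        HasDerivAt vy (-f * vx t - (vy t) ^ 2 - f ^ 2 - τ * vy t) t ∧
        HasDerivAt h0 (-h0 t * vy t + τ * h0 t) t) ∧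
      v0 0 = 0 ∧ vx 0 = 0 ∧ vy 0 = 0 ∧ h0 0 = c := by
  intro v0 vx vy h0
  refine ⟨?_, by simp [v0], by simp [vx], by simp [vy], by simp [h0]⟩
  intro t ht
  obtain ⟨ht0, ht1⟩ := ht
  have hcos : 0 < Real.cos (f * t) := by
    apply Real.cos_pos_of_mem_Ioo
    constructor
    · have : (0:ℝ) ≤ f * t := by positivity
      linarith [Real.pi_pos]
    · calc f * t < f * (Real.pi / (2 * f)) := by
            exact mul_lt_mul_of_pos_left ht1 hf
        _ = Real.pi / 2 := by field_simp
  have hcne : Real.cos (f * t) ≠ 0 := ne_of_gt hcos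
  have htan : HasDerivAt (fun s : ℝ => Real.tan (f * s))
      (1 / Real.cos (f * t) ^ 2 * f) t :=
    (Real.hasDerivAt_tan hcne).comp t (by simpa using (hasDerivAt_id t).const_mul f)
  have hpyth : Real.sin (f * t) ^ 2 = 1 - Real.cos (f * t) ^ 2 := by
    have := Real.sin_sq_add_cos_sq (f * t); linarith
  refine ⟨?_, ?_, ?_, ?_⟩
  · refine (hasDerivAt_const t (0:ℝ)).congr_deriv ?_
    simp [v0]
  · have := htan.const_mul τ
    refine this.congr_deriv ?_
    symm
    simp only [vx, vy, Real.tan_eq_sin_div_cos]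
    field_simp
    linear_combination (τ) * (Real.sin_sq_add_cos_sq (f*t))
  · have := htan.const_mul (-f)
    refine this.congr_deriv ?_
    symm
    simp only [vx, vy, Real.tan_eq_sin_div_cos]
    field_simp
    linear_combination (-f) * (Real.sin_sq_add_cos_sq (f*t))
  · have hnum : HasDerivAt (fun s : ℝ => c * Real.exp (τ * s))
        (c * Real.exp (τ * t) * τ) t := by
      have : HasDerivAt (fun s : ℝ => Real.exp (τ * s)) (Real.exp (τ * t) * τ) t :=
        (Real.hasDerivAt_exp (τ * t)).comp t (by simpa using (hasDerivAt_id t).const_mul τ)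
      simpa [mul_assoc] using this.const_mul c
    have hden : HasDerivAt (fun s : ℝ => Real.cos (f * s))
        (-Real.sin (f * t) * f) t :=
      (Real.hasDerivAt_cos (f * t)).comp t (by simpa using (hasDerivAt_id t).const_mul f)
    have := hnum.div hden hcne
    refine this.congr_deriv ?_
    symm
    simp only [h0, vy, Real.tan_eq_sin_div_cos]
    field_simp
    ring
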